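/- Under the additive sparse attack model with at most r attacked inputs and at most s attacked outputs, the state of the LTI system can be correctly reconstructed (possibly with bounded delay) from the controller input and observed output sequences if and only if the system is (2r,2s)-sparse strongly observable. -/

import Mathlib

open Matrix

/-- State sequence of the discrete-time LTI system x(t+1)=Ax(t)+Bu(t). -/
def stSeq {n m : ℕ} (A : Matrix (Fin n) (Fin n) ℝ) (B : Matrix (Fin n) (Fin m) ℝ)
    (x0 : Fin n → ℝ) (u : ℕ → Fin m → ℝ) : ℕ → Fin n → ℝ
  | 0 => x0
  | t + 1 => A.mulVec (stSeq A B x0 u t) + B.mulVec (u t)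

/-- Output sequence y(t)=Cx(t)+Du(t). -/
def outSeq {n m p : ℕ} (A : Matrix (Fin n) (Fin n) ℝ) (B : Matrix (Fin n) (Fin m) ℝ)
    (C : Matrix (Fin p) (Fin n) ℝ) (D : Matrix (Fin p) (Fin m) ℝ)
    (x0 : Fin n → ℝ) (u : ℕ → Fin m → ℝ) (t : ℕ) : Fin p → ℝ :=
  C.mulVec (stSeq A B x0 u t) + D.mulVec (u t)

/-- Strong observability of the subsystem obtained by treating the inputs in `Γu` as unknown
and keeping only the outputs in `Γy`: a zero output sequence on `Γy`, for any input sequence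
supported on `Γu`, forces a zero initial state. -/
def SubStrongObs {n m p : ℕ} (A : Matrix (Fin n) (Fin n) ℝ) (B : Matrix (Fin n) (Fin m) ℝ)
    (C : Matrix (Fin p) (Fin n) ℝ) (D : Matrix (Fin p) (Fin m) ℝ)
    (Γu : Finset (Fin m)) (Γy : Finset (Fin p)) : Prop :=
  ∀ (x0 : Fin n → ℝ) (u : ℕ → Fin m → ℝ),
    (∀ (t : ℕ) (i : Fin m), i ∉ Γu → u t i = 0) →
    (∀ t : ℕ, ∀ j ∈ Γy, outSeq A B C D x0 u t j = 0) → x0 = 0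

/-- `(r,s)`-sparse strong observability: every subsystem with at most `r` unknown inputs and
at least `p - s` retained outputs is strongly observable. -/
def SparseStrongObs {n m p : ℕ} (A : Matrix (Fin n) (Fin n) ℝ) (B : Matrix (Fin n) (Fin m) ℝ)
    (C : Matrix (Fin p) (Fin n) ℝ) (D : Matrix (Fin p) (Fin m) ℝ) (r s : ℕ) : Prop :=
  ∀ (Γu : Finset (Fin m)) (Γy : Finset (Fin p)),
    Γu.card ≤ r → p - s ≤ Γy.card → SubStrongObs A B C D Γu Γy

/-- Secure state reconstruction under the sparse attack model: any two attacked trajectories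
sharing the same controller input sequence and the same observed output sequence must have
the same (initial) state. -/
def CanReconstruct {n m p : ℕ} (A : Matrix (Fin n) (Fin n) ℝ) (B : Matrix (Fin n) (Fin m) ℝ)
    (C : Matrix (Fin p) (Fin n) ℝ) (D : Matrix (Fin p) (Fin m) ℝ) (r s : ℕ) : Prop :=
  ∀ (u : ℕ → Fin m → ℝ) (x1 x2 : Fin n → ℝ)
    (w1 w2 : ℕ → Fin m → ℝ) (a1 a2 : ℕ → Fin p → ℝ),
    (∃ Γ1 : Finset (Fin m), Γ1.card ≤ r ∧ ∀ (t : ℕ) (i : Fin m), i ∉ Γ1 → w1 t i = 0) →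
    (∃ Γ2 : Finset (Fin m), Γ2.card ≤ r ∧ ∀ (t : ℕ) (i : Fin m), i ∉ Γ2 → w2 t i = 0) →
    (∃ Δ1 : Finset (Fin p), Δ1.card ≤ s ∧ ∀ (t : ℕ) (j : Fin p), j ∉ Δ1 → a1 t j = 0) →
    (∃ Δ2 : Finset (Fin p), Δ2.card ≤ s ∧ ∀ (t : ℕ) (j : Fin p), j ∉ Δ2 → a2 t j = 0) →
    (∀ t : ℕ, outSeq A B C D x1 (fun t' => u t' + w1 t') t + a1 t
            = outSeq A B C D x2 (fun t' => u t' + w2 t') t + a2 t) →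
    x1 = x2

lemma stSeq_sub {n m : ℕ} (A : Matrix (Fin n) (Fin n) ℝ) (B : Matrix (Fin n) (Fin m) ℝ)
    (x1 x2 : Fin n → ℝ) (u1 u2 : ℕ → Fin m → ℝ) (t : ℕ) :
    stSeq A B (x1 - x2) (fun t' => u1 t' - u2 t') t = stSeq A B x1 u1 t - stSeq A B x2 u2 t := by
  induction t with
  | zero => rfl
  | succ t ih =>
    show A.mulVec _ + B.mulVec _ = _
    rw [ih, Matrix.mulVec_sub, Matrix.mulVec_sub]
    show _ = A.mulVec _ + B.mulVec _ - (A.mulVec _ + B.mulVec _)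
    abel

lemma outSeq_sub {n m p : ℕ} (A : Matrix (Fin n) (Fin n) ℝ) (B : Matrix (Fin n) (Fin m) ℝ)
    (C : Matrix (Fin p) (Fin n) ℝ) (D : Matrix (Fin p) (Fin m) ℝ)
    (x1 x2 : Fin n → ℝ) (u1 u2 : ℕ → Fin m → ℝ) (t : ℕ) :
    outSeq A B C D (x1 - x2) (fun t' => u1 t' - u2 t') t
      = outSeq A B C D x1 u1 t - outSeq A B C D x2 u2 t := by
  unfold outSeq
  rw [stSeq_sub, Matrix.mulVec_sub, Matrix.mulVec_sub]
  abel

/-- under at most r attacked inputs and s attacked outputs, secure state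
reconstruction is possible iff the system is (2r,2s)-sparse strongly observable. -/
theorem secure_estimation_iff_sparse_strong_obs {n m p : ℕ}
    (A : Matrix (Fin n) (Fin n) ℝ) (B : Matrix (Fin n) (Fin m) ℝ)
    (C : Matrix (Fin p) (Fin n) ℝ) (D : Matrix (Fin p) (Fin m) ℝ) (r s : ℕ) :
    CanReconstruct A B C D r s ↔ SparseStrongObs A B C D (2 * r) (2 * s) := by
  constructor
  · -- CanReconstruct → SparseStrongObs
    intro hRec Γu Γy hΓu hΓy x0 u hu hy
    -- split Γu into two pieces of card ≤ r
    obtain ⟨Γ1, hΓ1sub, hΓ1card⟩ := Finset.exists_subset_card_eq (s := Γu) (n := min r Γu.card) (min_le_right _ _)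
    set Γ2 : Finset (Fin m) := Γu \ Γ1 with hΓ2
    have hΓ2card : Γ2.card = Γu.card - Γ1.card := Finset.card_sdiff_of_subset hΓ1sub
    -- split Γyᶜ into two pieces of card ≤ s
    set Δ : Finset (Fin p) := Γyᶜ with hΔ
    have hΔcard : Δ.card ≤ 2 * s := by
      have := Finset.card_compl Γy
      simp only [hΔ, Fintype.card_fin] at this ⊢
      omega
    obtain ⟨Δ1, hΔ1sub, hΔ1card⟩ := Finset.exists_subset_card_eq (s := Δ) (n := min s Δ.card) (min_le_right _ _)
    set Δ2 : Finset (Fin p) := Δ \ Δ1 with hΔ2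
    have hΔ2card : Δ2.card = Δ.card - Δ1.card := Finset.card_sdiff_of_subset hΔ1sub
    -- attacks
    set w1 : ℕ → Fin m → ℝ := fun t i => if i ∈ Γ1 then u t i else 0 with hw1
    set w2 : ℕ → Fin m → ℝ := fun t => w1 t - u t with hw2def
    set y : ℕ → Fin p → ℝ := outSeq A B C D x0 u with hy0
    set a2 : ℕ → Fin p → ℝ := fun t j => if j ∈ Δ1 then y t j else 0 with ha2
    set a1 : ℕ → Fin p → ℝ := fun t => a2 t - y t with ha1
    have key := hRec (fun _ => 0) x0 0 w1 w2 a1 a2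
      ⟨Γ1, by omega, fun t i hi => by simp [hw1, hi]⟩
      ⟨Γ2, by omega, fun t i hi => by
        by_cases h1 : i ∈ Γ1
        · simp [hw2def, hw1, h1]
        · have : i ∉ Γu := fun hmem => hi (Finset.mem_sdiff.mpr ⟨hmem, h1⟩)
          simp [hw2def, hw1, h1, hu t i this]⟩
      ⟨Δ2, by omega, fun t j hj => by
        by_cases h1 : j ∈ Δ1
        · simp [ha1, ha2, h1]
        · have hjΔ : j ∉ Δ := fun hmem => hj (Finset.mem_sdiff.mpr ⟨hmem, h1⟩)
          have hjy : j ∈ Γy := by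
            by_contra hc
            exact hjΔ (Finset.mem_compl.mpr hc)
          simp only [ha1, ha2, if_neg h1, Pi.sub_apply, zero_sub, neg_eq_zero, hy0]
          exact hy t j hjy⟩
      ⟨Δ1, by omega, fun t j hj => by simp [ha2, hj]⟩
      ?_
    · exact key
    · intro t
      have hdiff : outSeq A B C D x0 w1 t - outSeq A B C D 0 w2 t = y t := by
        have := outSeq_sub A B C D x0 0 w1 w2 t
        have hx : x0 - 0 = x0 := sub_zero x0
        have hu' : (fun t' => w1 t' - w2 t') = u := by
          funext t' i
          simp [hw2def]
        rw [hx, hu'] at this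
        rw [← this]
      have hz : (fun t' : ℕ => (fun _ : ℕ => (0 : Fin m → ℝ)) t' + w1 t') = w1 := by
        funext t' i; simp
      have hz2 : (fun t' : ℕ => (fun _ : ℕ => (0 : Fin m → ℝ)) t' + w2 t') = w2 := by
        funext t' i; simp
      rw [hz, hz2]
      funext j
      have := congrFun hdiff j
      simp only [ha1, Pi.add_apply, Pi.sub_apply] at *
      linarith
  · -- SparseStrongObs → CanReconstruct
    intro hObs u x1 x2 w1 w2 a1 a2 ⟨Γ1, hc1, hs1⟩ ⟨Γ2, hc2, hs2⟩ ⟨Δ1, hd1, hsa1⟩ ⟨Δ2, hd2, hsa2⟩ hout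
    have hcardu : (Γ1 ∪ Γ2).card ≤ 2 * r := le_trans (Finset.card_union_le _ _) (by omega)
    have hcardy : p - 2 * s ≤ ((Δ1 ∪ Δ2)ᶜ : Finset (Fin p)).card := by
      have h1 : (Δ1 ∪ Δ2).card ≤ 2 * s := le_trans (Finset.card_union_le _ _) (by omega)
      have h2 := Finset.card_compl (Δ1 ∪ Δ2)
      simp only [Fintype.card_fin] at h2
      omega
    have key := hObs (Γ1 ∪ Γ2) (Δ1 ∪ Δ2)ᶜ hcardu hcardy (x1 - x2) (fun t => w1 t - w2 t)
      (fun t i hi => by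
        have h1 : i ∉ Γ1 := fun h => hi (Finset.mem_union_left _ h)
        have h2 : i ∉ Γ2 := fun h => hi (Finset.mem_union_right _ h)
        simp [hs1 t i h1, hs2 t i h2])
      (fun t j hj => by
        have hj1 : j ∉ Δ1 := fun h => (Finset.mem_compl.mp hj) (Finset.mem_union_left _ h)
        have hj2 : j ∉ Δ2 := fun h => (Finset.mem_compl.mp hj) (Finset.mem_union_right _ h)
        have heq : outSeq A B C D (x1 - x2) (fun t' => w1 t' - w2 t') t
            = outSeq A B C D x1 (fun t' => u t' + w1 t') t
              - outSeq A B C D x2 (fun t' => u t' + w2 t') t := by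
          have := outSeq_sub A B C D x1 x2 (fun t' => u t' + w1 t') (fun t' => u t' + w2 t') t
          have huu : (fun t' => (u t' + w1 t') - (u t' + w2 t')) = fun t' => w1 t' - w2 t' := by
            funext t' i; simp only [Pi.add_apply, Pi.sub_apply]; ring
          rw [huu] at this
          exact this
        have hout' := congrFun (hout t) j
        have := congrFun heq j
        simp only [Pi.add_apply, Pi.sub_apply] at hout' this
        rw [this]
        rw [hsa1 t j hj1, hsa2 t j hj2] at hout'
        linarith)
    exact sub_eq_zero.mp key
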